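/- Let A be an Arens regular Banach algebra, X a Banach A-bimodule, and D : A → X* a bounded surjective derivation. Then D'' : A** → X*** is a derivation if and only if for every x'' ∈ X**, the map a'' ↦ x''a'' from A** to X** is weak-star to weak continuous. -/

import Mathlib

set_option maxHeartbeats 1000000

open Filter Topology ContinuousLinearMap NormedSpace

noncomputable section DualSetup

/-- `NormedSpace.Dual` as in the older Mathlib (removed since; `StrongDual` replaces it). -/
abbrev NormedSpace.Dual (𝕜 : Type*) [NontriviallyNormedField 𝕜] (E : Type*)
    [SeminormedAddCommGroup E] [NormedSpace 𝕜 E] : Type _ := E →L[𝕜] 𝕜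

instance (𝕜 : Type*) [NontriviallyNormedField 𝕜] (E : Type*)
    [SeminormedAddCommGroup E] [NormedSpace 𝕜 E] : NormedSpace 𝕜 (NormedSpace.Dual 𝕜 E) :=
  inferInstance

instance (𝕜 : Type*) [NontriviallyNormedField 𝕜] (E : Type*)
    [SeminormedAddCommGroup E] [NormedSpace 𝕜 E] :
    SeminormedAddCommGroup (NormedSpace.Dual 𝕜 E) :=
  inferInstance

end DualSetup

noncomputable section ArensSetup

/-- The adjoint (transpose) of a continuous linear map between normed spaces. -/
def adjCLM {E F : Type*} [SeminormedAddCommGroup E] [NormedSpace ℝ E]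
    [SeminormedAddCommGroup F] [NormedSpace ℝ F] (T : E →L[ℝ] F) :
    Dual ℝ F →L[ℝ] Dual ℝ E :=
  (ContinuousLinearMap.compL ℝ E F ℝ).flip T

@[simp] theorem adjCLM_apply {E F : Type*} [SeminormedAddCommGroup E] [NormedSpace ℝ E]
    [SeminormedAddCommGroup F] [NormedSpace ℝ F] (T : E →L[ℝ] F) (g : Dual ℝ F) (x : E) :
    adjCLM T g x = g (T x) := rfl

/-- One-step Arens-type adjoint of a bounded bilinear map:
`ext1 β g' e = g' ∘ (β e)`. -/
def ext1 {E F G : Type*} [SeminormedAddCommGroup E] [NormedSpace ℝ E]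
    [SeminormedAddCommGroup F] [NormedSpace ℝ F] [SeminormedAddCommGroup G] [NormedSpace ℝ G]
    (β : E →L[ℝ] F →L[ℝ] G) : Dual ℝ G →L[ℝ] E →L[ℝ] Dual ℝ F :=
  ((ContinuousLinearMap.compL ℝ F G ℝ).flip.comp β).flip

@[simp] theorem ext1_apply {E F G : Type*} [SeminormedAddCommGroup E] [NormedSpace ℝ E]
    [SeminormedAddCommGroup F] [NormedSpace ℝ F] [SeminormedAddCommGroup G] [NormedSpace ℝ G]
    (β : E →L[ℝ] F →L[ℝ] G) (g' : Dual ℝ G) (e : E) (f : F) :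
    ext1 β g' e f = g' (β e f) := rfl

/-- Triple adjoint: the (first) Arens extension of a bounded bilinear map to the
second duals. -/
def ext3 {E F G : Type*} [SeminormedAddCommGroup E] [NormedSpace ℝ E]
    [SeminormedAddCommGroup F] [NormedSpace ℝ F] [SeminormedAddCommGroup G] [NormedSpace ℝ G]
    (β : E →L[ℝ] F →L[ℝ] G) :
    Dual ℝ (Dual ℝ E) →L[ℝ] Dual ℝ (Dual ℝ F) →L[ℝ] Dual ℝ (Dual ℝ G) :=
  ext1 (ext1 (ext1 β))

variable (A : Type*) [NonUnitalNormedRing A] [NormedSpace ℝ A]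
  [SMulCommClass ℝ A A] [IsScalarTower ℝ A A] [CompleteSpace A]

/-- The first (left) Arens product on `A**`: `⟨a''b'', a'⟩ = ⟨a'', b''a'⟩`. -/
def fArens : Dual ℝ (Dual ℝ A) →L[ℝ] Dual ℝ (Dual ℝ A) →L[ℝ] Dual ℝ (Dual ℝ A) :=
  ext3 (ContinuousLinearMap.mul ℝ A)

/-- The second (right) Arens product on `A**`: `⟨a''∘b'', a'⟩ = ⟨b'', a'∘a''⟩`. -/
def sArens : Dual ℝ (Dual ℝ A) →L[ℝ] Dual ℝ (Dual ℝ A) →L[ℝ] Dual ℝ (Dual ℝ A) :=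
  (ext3 (ContinuousLinearMap.mul ℝ A).flip).flip

/-- `A` is Arens regular when the two Arens products on `A**` coincide. -/
def ArensRegular : Prop := fArens A = sArens A

variable {A}

/-- Weak-star to weak continuity for a map from the dual of `E` into `F`. -/
def WStarToWCont {E F : Type*} [SeminormedAddCommGroup E] [NormedSpace ℝ E]
    [SeminormedAddCommGroup F] [NormedSpace ℝ F] (f : Dual ℝ E → F) : Prop :=
  Continuous fun x : WeakDual ℝ E => toWeakSpace ℝ F (f (WeakDual.toStrongDual x))

variable (A)

/-- The second adjoint `T'' : A** → A**` of `T : A → A`. -/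
def secondAdj (T : A →L[ℝ] A) : Dual ℝ (Dual ℝ A) →L[ℝ] Dual ℝ (Dual ℝ A) :=
  adjCLM (adjCLM T)

/-- Left action of `A` on `A*`: `⟨a·a', b⟩ = ⟨a', ba⟩`. -/
def dualLeft : A →L[ℝ] Dual ℝ A →L[ℝ] Dual ℝ A :=
  (ext1 (ContinuousLinearMap.mul ℝ A).flip).flip

/-- Right action of `A` on `A*`: `⟨a'·a, b⟩ = ⟨a', ab⟩`. -/
def dualRight : Dual ℝ A →L[ℝ] A →L[ℝ] Dual ℝ A :=
  ext1 (ContinuousLinearMap.mul ℝ A)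

/-- Left action of `A**` (first Arens product) on `A***`. -/
def dualLeft2 : Dual ℝ (Dual ℝ A) →L[ℝ] Dual ℝ (Dual ℝ (Dual ℝ A)) →L[ℝ]
    Dual ℝ (Dual ℝ (Dual ℝ A)) :=
  (ext1 (fArens A).flip).flip

/-- Right action of `A**` (first Arens product) on `A***`. -/
def dualRight2 : Dual ℝ (Dual ℝ (Dual ℝ A)) →L[ℝ] Dual ℝ (Dual ℝ A) →L[ℝ]
    Dual ℝ (Dual ℝ (Dual ℝ A)) :=
  ext1 (fArens A)

end ArensSetup

section BimoduleSetup

set_option maxHeartbeats 1000000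

open Filter Topology ContinuousLinearMap NormedSpace

/-- A Banach `A`-bimodule: bounded bilinear left and right actions satisfying the
usual compatibility axioms. -/
structure BanachBimodule (A X : Type*) [NonUnitalNormedRing A] [NormedSpace ℝ A]
    [SMulCommClass ℝ A A] [IsScalarTower ℝ A A]
    [NormedAddCommGroup X] [NormedSpace ℝ X] [CompleteSpace X] where
  l : A →L[ℝ] X →L[ℝ] X
  r : X →L[ℝ] A →L[ℝ] X
  l_mul : ∀ a b x, l (a * b) x = l a (l b x)
  r_mul : ∀ x a b, r (r x a) b = r x (a * b)
  l_r : ∀ a x b, l a (r x b) = r (l a x) b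

variable {A X : Type*} [NonUnitalNormedRing A] [NormedSpace ℝ A]
  [SMulCommClass ℝ A A] [IsScalarTower ℝ A A] [CompleteSpace A]
  [NormedAddCommGroup X] [NormedSpace ℝ X] [CompleteSpace X]

/-- Left action of `A` on `X*`: `⟨a·f, x⟩ = ⟨f, x·a⟩`. -/
noncomputable def modDualLeft (M : BanachBimodule A X) : A →L[ℝ] Dual ℝ X →L[ℝ] Dual ℝ X :=
  (ext1 M.r.flip).flip

/-- Right action of `A` on `X*`: `⟨f·a, x⟩ = ⟨f, a·x⟩`. -/
noncomputable def modDualRight (M : BanachBimodule A X) : Dual ℝ X →L[ℝ] A →L[ℝ] Dual ℝ X :=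
  ext1 M.l

/-- Left action of `A**` on `X**` (first Arens extension). -/
noncomputable def modL2 (M : BanachBimodule A X) :
    Dual ℝ (Dual ℝ A) →L[ℝ] Dual ℝ (Dual ℝ X) →L[ℝ] Dual ℝ (Dual ℝ X) :=
  ext3 M.l

/-- Right action of `A**` on `X**` (first Arens extension); `modR2 M x'' a'' = x''a''`. -/
noncomputable def modR2 (M : BanachBimodule A X) :
    Dual ℝ (Dual ℝ X) →L[ℝ] Dual ℝ (Dual ℝ A) →L[ℝ] Dual ℝ (Dual ℝ X) :=
  ext3 M.r

/-- Left action of `A**` on `X***`: `⟨a''·x''', x''⟩ = ⟨x''', x''a''⟩`. -/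
noncomputable def modL3 (M : BanachBimodule A X) :
    Dual ℝ (Dual ℝ A) →L[ℝ] Dual ℝ (Dual ℝ (Dual ℝ X)) →L[ℝ] Dual ℝ (Dual ℝ (Dual ℝ X)) :=
  (ext1 (modR2 M).flip).flip

/-- Right action of `A**` on `X***`: `⟨x'''·a'', x''⟩ = ⟨x''', a''x''⟩`. -/
noncomputable def modR3 (M : BanachBimodule A X) :
    Dual ℝ (Dual ℝ (Dual ℝ X)) →L[ℝ] Dual ℝ (Dual ℝ A) →L[ℝ] Dual ℝ (Dual ℝ (Dual ℝ X)) :=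
  ext1 (modL2 M)

end BimoduleSetup

section DerivationSetup

variable {B Y : Type*} [SeminormedAddCommGroup B] [NormedSpace ℝ B]
  [SeminormedAddCommGroup Y] [NormedSpace ℝ Y]

/-- `D` is a derivation with respect to the multiplication `m` and the module
actions `l`, `r`. -/
def IsDeriv (m : B →L[ℝ] B →L[ℝ] B) (l : B →L[ℝ] Y →L[ℝ] Y)
    (r : Y →L[ℝ] B →L[ℝ] Y) (D : B →L[ℝ] Y) : Prop :=
  ∀ a b, D (m a b) = l a (D b) + r (D a) b

/-- `D` is an inner derivation: `D a = a·y − y·a` for some fixed `y`. -/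
def IsInner (l : B →L[ℝ] Y →L[ℝ] Y) (r : Y →L[ℝ] B →L[ℝ] Y) (D : B →L[ℝ] Y) : Prop :=
  ∃ y, ∀ a, D a = l a y - r y a

/-- `D` is a `T-S`-derivation: `D(ab) = T(a)·D(b) + D(a)·S(b)`. -/
def IsTSDeriv (m : B →L[ℝ] B →L[ℝ] B) (l : B →L[ℝ] Y →L[ℝ] Y)
    (r : Y →L[ℝ] B →L[ℝ] Y) (T S : B →L[ℝ] B) (D : B →L[ℝ] Y) : Prop :=
  ∀ a b, D (m a b) = l (T a) (D b) + r (D a) (S b)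

/-- `D` is an inner `T-S`-derivation: `D a = T(a)·y − y·S(a)` for some fixed `y`. -/
def IsTSInner (l : B →L[ℝ] Y →L[ℝ] Y) (r : Y →L[ℝ] B →L[ℝ] Y)
    (T S : B →L[ℝ] B) (D : B →L[ℝ] Y) : Prop :=
  ∃ y, ∀ a, D a = l (T a) y - r y (S a)

end DerivationSetup



section AuxRep
open Filter Topology ContinuousLinearMap NormedSpace

/-- A linear functional continuous for the weak topology of a pairing is given by pairing
with an element. -/
theorem exists_rep_of_weakBilin_continuous {E F : Type*} [AddCommGroup E] [Module ℝ E]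
    [AddCommGroup F] [Module ℝ F] (B : E →ₗ[ℝ] F →ₗ[ℝ] ℝ) (φ : E →ₗ[ℝ] ℝ)
    (hφ : Continuous fun x : WeakBilin B => φ x) : ∃ y : F, ∀ x, φ x = B x y := by
  have h0 : Filter.Tendsto (fun x : WeakBilin B => φ x) (𝓝 0) (𝓝 0) := by
    have := hφ.tendsto 0
    rwa [show (φ (0 : WeakBilin B) : ℝ) = 0 from φ.map_zero] at this
  have hmem : (fun x : WeakBilin B => φ x) ⁻¹' Metric.ball (0 : ℝ) 1 ∈ 𝓝 (0 : WeakBilin B) :=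
    h0 (Metric.ball_mem_nhds 0 one_pos)
  rw [(LinearMap.hasBasis_weakBilin B).mem_iff] at hmem
  obtain ⟨U, hU, hsub⟩ := hmem
  obtain ⟨s, r, hr, rfl⟩ := (SeminormFamily.basisSets_iff _).mp hU
  have hker : ⨅ y : s, LinearMap.ker (B.flip (y : F)) ≤ LinearMap.ker φ := by
    intro x hx
    simp only [Submodule.mem_iInf, LinearMap.mem_ker, LinearMap.flip_apply] at hx
    rw [LinearMap.mem_ker]
    by_contra hne
    have hx0 : (s.sup (LinearMap.toSeminormFamily B)) x = 0 := by
      refine le_antisymm (Seminorm.finset_sup_apply_le le_rfl fun y hy => ?_) (apply_nonneg _ _)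
      simp [LinearMap.toSeminormFamily_apply, hx ⟨y, hy⟩]
    have hmem2 : ∀ t : ℝ, (t • x : E) ∈ (id (Seminorm.ball (s.sup (LinearMap.toSeminormFamily B)) 0 r) : Set E) := by
      intro t
      show t • x ∈ Seminorm.ball _ 0 r
      rw [Seminorm.mem_ball_zero, map_smul_eq_mul, hx0, mul_zero]
      exact hr
    have hlt : ∀ t : ℝ, |t| * |φ x| < 1 := by
      intro t
      have : φ (t • x) ∈ Metric.ball (0 : ℝ) 1 := hsub (hmem2 t)
      simpa [Real.dist_eq, map_smul] using this
    have h2 := hlt (2 / |φ x|)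
    rw [abs_div, abs_abs, abs_two, div_mul_cancel₀ 2 (by simpa using hne)] at h2
    norm_num at h2
  have hspan := mem_span_of_iInf_ker_le_ker (L := fun y : s => B.flip (y : F)) (K := φ) hker
  have hrange : Submodule.span ℝ (Set.range fun y : s => B.flip (y : F)) ≤ LinearMap.range B.flip :=
    Submodule.span_le.mpr (by rintro _ ⟨y, rfl⟩; exact LinearMap.mem_range_self _ _)
  obtain ⟨y, hy⟩ := hrange hspan
  exact ⟨y, fun x => by rw [← hy]; rfl⟩

end AuxRep

section Statements
set_option maxHeartbeats 1000000
open Filter Topology ContinuousLinearMap NormedSpace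

variable {A : Type*} [NonUnitalNormedRing A] [NormedSpace ℝ A]
  [SMulCommClass ℝ A A] [IsScalarTower ℝ A A] [CompleteSpace A]

variable {X : Type*} [NormedAddCommGroup X] [NormedSpace ℝ X] [CompleteSpace X]

/-- The element of `A*` given by pairing. -/
noncomputable def psiOf (M : BanachBimodule A X) (x'' : Dual ℝ (Dual ℝ X))
    (x''' : Dual ℝ (Dual ℝ (Dual ℝ X))) : Dual ℝ A :=
  x'''.comp ((modR2 M x'').comp (inclusionInDoubleDual ℝ A))

/-- The intermediate condition: the functional is represented by an element of `A*`. -/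
def CondC (M : BanachBimodule A X) (x'' : Dual ℝ (Dual ℝ X)) : Prop :=
  ∀ (x''' : Dual ℝ (Dual ℝ (Dual ℝ X))) (Φ : Dual ℝ (Dual ℝ A)),
    x''' (modR2 M x'' Φ) = Φ (psiOf M x'' x''')

theorem key_identity (M : BanachBimodule A X) (D : A →L[ℝ] Dual ℝ X)
    (hD : IsDeriv (ContinuousLinearMap.mul ℝ A) (modDualLeft M) (modDualRight M) D)
    (Φ Ψ : Dual ℝ (Dual ℝ A)) (x'' : Dual ℝ (Dual ℝ X)) :
    fArens A Φ Ψ (adjCLM D x'') =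
      Φ (psiOf M x'' (Ψ.comp (adjCLM D))) + Φ (adjCLM D (modL2 M Ψ x'')) := by
  rw [← map_add]
  show Φ (ext1 (ext1 (ContinuousLinearMap.mul ℝ A)) Ψ (adjCLM D x'')) = _
  congr 1
  ext a
  show Ψ (ext1 (ContinuousLinearMap.mul ℝ A) (adjCLM D x'') a) =
    (Ψ.comp (adjCLM D)) (modR2 M x'' (inclusionInDoubleDual ℝ A a))
      + (modL2 M Ψ x'') (D a)
  show _ = Ψ (adjCLM D (modR2 M x'' (inclusionInDoubleDual ℝ A a)))
      + Ψ (ext1 (ext1 M.l) x'' (D a))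
  rw [← map_add]
  congr 1
  ext b
  show adjCLM D x'' ((ContinuousLinearMap.mul ℝ A) a b) =
    modR2 M x'' (inclusionInDoubleDual ℝ A a) (D b) + x'' (ext1 M.l (D a) b)
  show x'' (D (a * b)) =
    x'' (ext1 (ext1 M.r) (inclusionInDoubleDual ℝ A a) (D b)) + x'' (modDualRight M (D a) b)
  have hE : ext1 (ext1 M.r) (inclusionInDoubleDual ℝ A a) (D b) = modDualLeft M a (D b) := by
    ext x
    rfl
  have hD' := hD a b
  rw [ContinuousLinearMap.mul_apply'] at hD'
  rw [hE, ← map_add, ← hD']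

theorem exists_psi (D : A →L[ℝ] Dual ℝ X) (hsurj : Function.Surjective D)
    (x''' : Dual ℝ (Dual ℝ (Dual ℝ X))) :
    ∃ Ψ : Dual ℝ (Dual ℝ A), ∀ y'' : Dual ℝ (Dual ℝ X), Ψ (adjCLM D y'') = x''' y'' := by
  obtain ⟨C, hC0, hC⟩ := D.exists_preimage_norm_le hsurj
  have hbound : ∀ y'' : Dual ℝ (Dual ℝ X), ‖y''‖ ≤ C * ‖adjCLM D y''‖ := by
    intro y''
    refine ContinuousLinearMap.opNorm_le_bound _ (by positivity) fun f => ?_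
    obtain ⟨a, ha, hna⟩ := hC f
    calc ‖y'' f‖ = ‖(adjCLM D y'') a‖ := by rw [adjCLM_apply, ha]
    _ ≤ ‖adjCLM D y''‖ * ‖a‖ := le_opNorm _ _
    _ ≤ ‖adjCLM D y''‖ * (C * ‖f‖) := by
        exact mul_le_mul_of_nonneg_left hna (norm_nonneg _)
    _ = C * ‖adjCLM D y''‖ * ‖f‖ := by ring
  have hinj : Function.Injective ((adjCLM D : Dual ℝ (Dual ℝ X) →L[ℝ] Dual ℝ A) :
      Dual ℝ (Dual ℝ X) →ₗ[ℝ] Dual ℝ A) := by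
    intro y z h
    have h2 := hbound (y - z)
    rw [map_sub] at h2
    have h3 : (adjCLM D) y - (adjCLM D) z = 0 := by
      have h4 : (adjCLM D) y = (adjCLM D) z := h
      rw [h4, sub_self]
    rw [h3, norm_zero, mul_zero] at h2
    exact sub_eq_zero.mp (norm_le_zero_iff.mp h2)
  set T := ((adjCLM D : Dual ℝ (Dual ℝ X) →L[ℝ] Dual ℝ A) :
      Dual ℝ (Dual ℝ X) →ₗ[ℝ] Dual ℝ A) with hT
  let e := LinearEquiv.ofInjective T hinj
  let p : Subspace ℝ (Dual ℝ A) := LinearMap.range T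
  let f₀ : p →ₗ[ℝ] ℝ :=
    (x''' : Dual ℝ (Dual ℝ X) →ₗ[ℝ] ℝ).comp (e.symm : p →ₗ[ℝ] Dual ℝ (Dual ℝ X))
  have hf₀ : ∀ z : p, ‖f₀ z‖ ≤ (‖x'''‖ * C) * ‖z‖ := by
    intro z
    have hz : T (e.symm z) = (z : Dual ℝ A) := by
      have h5 := congrArg (Subtype.val) (e.apply_symm_apply z)
      simpa [e, LinearEquiv.ofInjective_apply] using h5
    calc ‖f₀ z‖ = ‖x''' (e.symm z)‖ := rfl
    _ ≤ ‖x'''‖ * ‖e.symm z‖ := le_opNorm _ _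
    _ ≤ ‖x'''‖ * (C * ‖T (e.symm z)‖) :=
        mul_le_mul_of_nonneg_left (hz ▸ hbound (e.symm z)) (norm_nonneg _)
    _ = (‖x'''‖ * C) * ‖(z : Dual ℝ A)‖ := by rw [hz]; ring
    _ = (‖x'''‖ * C) * ‖z‖ := rfl
  let f₁ : p →L[ℝ] ℝ := f₀.mkContinuous (‖x'''‖ * C) hf₀
  obtain ⟨g, hg, -⟩ := exists_extension_norm_eq p f₁
  refine ⟨g, fun y'' => ?_⟩
  have hmem : adjCLM D y'' ∈ p := LinearMap.mem_range_self T y''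
  have h1 : g (adjCLM D y'') = f₁ ⟨adjCLM D y'', hmem⟩ := hg ⟨adjCLM D y'', hmem⟩
  rw [h1]
  show x''' (e.symm ⟨T y'', hmem⟩) = x''' y''
  congr 1
  have h6 : e y'' = ⟨T y'', hmem⟩ := by
    apply Subtype.ext
    simp [e, LinearEquiv.ofInjective_apply]
  rw [← h6, LinearEquiv.symm_apply_apply]

/-- For Arens regular `A` and a surjective derivation `D : A → X*`, `D''` is a derivation
iff `a'' ↦ x''a''` is weak-star to weak continuous for all `x'' ∈ X**`. -/
theorem secondAdjoint_derivation_iff_wsw (hreg : ArensRegular A) (M : BanachBimodule A X)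
    (D : A →L[ℝ] Dual ℝ X)
    (hD : IsDeriv (ContinuousLinearMap.mul ℝ A) (modDualLeft M) (modDualRight M) D)
    (hsurj : Function.Surjective D) :
    IsDeriv (fArens A) (modL3 M) (modR3 M) (adjCLM (adjCLM D)) ↔
      ∀ x'' : Dual ℝ (Dual ℝ X), WStarToWCont (fun a'' => modR2 M x'' a'') := by
  constructor
  · intro hder x''
    have hc : CondC M x'' := by
      intro x''' Φ
      obtain ⟨Ψ, hΨ⟩ := exists_psi D hsurj x'''
      have h1 := congrArg (fun T : Dual ℝ (Dual ℝ (Dual ℝ X)) => T x'') (hder Φ Ψ)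
      have h2 : fArens A Φ Ψ (adjCLM D x'') =
          Ψ (adjCLM D (modR2 M x'' Φ)) + Φ (adjCLM D (modL2 M Ψ x'')) := h1
      rw [key_identity M D hD Φ Ψ x''] at h2
      have h3 : Φ (psiOf M x'' (Ψ.comp (adjCLM D))) = Ψ (adjCLM D (modR2 M x'' Φ)) :=
        add_right_cancel h2
      have h4 : psiOf M x'' (Ψ.comp (adjCLM D)) = psiOf M x'' x''' := by
        ext a
        exact hΨ (modR2 M x'' (inclusionInDoubleDual ℝ A a))
      rw [← h4, h3]
      exact (hΨ (modR2 M x'' Φ)).symm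
    unfold WStarToWCont
    apply WeakBilin.continuous_of_continuous_eval
    intro x'''
    have heq : (fun aw : WeakDual ℝ (Dual ℝ A) =>
        (topDualPairing ℝ (Dual ℝ (Dual ℝ X))).flip
          (toWeakSpace ℝ (Dual ℝ (Dual ℝ X)) (modR2 M x'' (WeakDual.toStrongDual aw))) x''')
        = fun aw : WeakDual ℝ (Dual ℝ A) =>
            topDualPairing ℝ (Dual ℝ A) (WeakDual.toStrongDual aw) (psiOf M x'' x''') := by
      funext aw
      exact hc x''' (WeakDual.toStrongDual aw)
    show Continuous (fun aw : WeakDual ℝ (Dual ℝ A) =>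
        (topDualPairing ℝ (Dual ℝ (Dual ℝ X))).flip
          (toWeakSpace ℝ (Dual ℝ (Dual ℝ X)) (modR2 M x'' (WeakDual.toStrongDual aw))) x''')
    rw [heq]
    exact WeakBilin.eval_continuous (topDualPairing ℝ (Dual ℝ A)) (psiOf M x'' x''')
  · intro hw
    have hc : ∀ x'', CondC M x'' := by
      intro x'' x''' Φ
      have h1 : Continuous fun aw : WeakBilin (topDualPairing ℝ (Dual ℝ A)) =>
          ((x'''.comp (modR2 M x'') : Dual ℝ (Dual ℝ A) →L[ℝ] ℝ) :
            Dual ℝ (Dual ℝ A) →ₗ[ℝ] ℝ) aw :=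
        (WeakBilin.eval_continuous ((topDualPairing ℝ (Dual ℝ (Dual ℝ X))).flip) x''').comp
          (hw x'')
      obtain ⟨ψ, hψ⟩ := exists_rep_of_weakBilin_continuous (topDualPairing ℝ (Dual ℝ A)) _ h1
      have hpsi : psiOf M x'' x''' = ψ := by
        ext a
        exact hψ (inclusionInDoubleDual ℝ A a)
      rw [hpsi]
      exact hψ Φ
    intro Φ Ψ
    ext x''
    show fArens A Φ Ψ (adjCLM D x'') = _
    rw [key_identity M D hD Φ Ψ x'']
    show _ = Ψ (adjCLM D (modR2 M x'' Φ)) + Φ (adjCLM D (modL2 M Ψ x''))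
    congr 1
    exact (hc x'' (Ψ.comp (adjCLM D)) Φ).symm


end Statements
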